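/- arXiv:1805.10384 — 2 statements merged into one kernel-verified Lean document; each statement's English description precedes it below -/
import Mathlib

section
/- Let X_i, X_j, X_k be random vectors where X_i, X_j are i.i.d. with mean z_o = z_p, X_k is independent of X_i with mean z_q, and M is PSD. Then E[D_M^2(X_i, X_k)] − E[D_M^2(X_i, X_j)] ≥ D_M^2(z_o, z_q) − D_M^2(z_o, z_p) − E[D_M^2(X_i, z_o)]. Consequently, if D_M^2(z_o, z_q) − D_M^2(z_o, z_p) ≥ 1 + E[D_M^2(X_i, z_o)], then E[D_M^2(X_i, X_k)] − E[D_M^2(X_i, X_j)] ≥ 1. -/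
open Matrix MeasureTheory ProbabilityTheory

/-- Expansion of the expected sum of squares of `u - v + w` for independent,
componentwise-integrable, mean-zero `u`, `v` and a constant `w`. -/
lemma integral_sum_sq_expand {d : ℕ} {Ω : Type*} [MeasurableSpace Ω]
    (μ : Measure Ω) [IsProbabilityMeasure μ]
    (u v : Ω → Fin d → ℝ) (w : Fin d → ℝ)
    (hu : ∀ i, Integrable (fun ω => u ω i) μ)
    (hv : ∀ i, Integrable (fun ω => v ω i) μ)
    (hu2 : ∀ i, Integrable (fun ω => u ω i ^ 2) μ)
    (hv2 : ∀ i, Integrable (fun ω => v ω i ^ 2) μ)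
    (hmu : ∀ i, ∫ ω, u ω i ∂μ = 0)
    (hmv : ∀ i, ∫ ω, v ω i ∂μ = 0)
    (hindep : ∀ i, IndepFun (fun ω => u ω i) (fun ω => v ω i) μ) :
    ∫ ω, ∑ i, (u ω i - v ω i + w i) ^ 2 ∂μ
      = (∫ ω, ∑ i, u ω i ^ 2 ∂μ) + (∫ ω, ∑ i, v ω i ^ 2 ∂μ) + ∑ i, w i ^ 2 := by
  have huv : ∀ i, Integrable (fun ω => u ω i * v ω i) μ := fun i =>
    (hindep i).integrable_mul (hu i) (hv i)
  have hexp : ∀ i, (fun ω => (u ω i - v ω i + w i) ^ 2)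
      = fun ω => u ω i ^ 2 + v ω i ^ 2 - 2 * (u ω i * v ω i)
        + 2 * w i * u ω i - 2 * w i * v ω i + w i ^ 2 := by
    intro i; funext ω; ring
  have iA : ∀ i, Integrable (fun ω => u ω i ^ 2 + v ω i ^ 2) μ := fun i =>
    (hu2 i).add (hv2 i)
  have iB : ∀ i, Integrable (fun ω => u ω i ^ 2 + v ω i ^ 2 - 2 * (u ω i * v ω i)) μ :=
    fun i => (iA i).sub ((huv i).const_mul 2)
  have iC : ∀ i, Integrable (fun ω => u ω i ^ 2 + v ω i ^ 2 - 2 * (u ω i * v ω i)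
      + 2 * w i * u ω i) μ := fun i => (iB i).add ((hu i).const_mul _)
  have iD : ∀ i, Integrable (fun ω => u ω i ^ 2 + v ω i ^ 2 - 2 * (u ω i * v ω i)
      + 2 * w i * u ω i - 2 * w i * v ω i) μ := fun i => (iC i).sub ((hv i).const_mul _)
  have isq : ∀ i, Integrable (fun ω => (u ω i - v ω i + w i) ^ 2) μ := by
    intro i; rw [hexp i]; exact (iD i).add (integrable_const _)
  have hcross : ∀ i, ∫ ω, u ω i * v ω i ∂μ = 0 := by
    intro i
    have h := (hindep i).integral_fun_mul_eq_mul_integral (hu i).aestronglyMeasurable (hv i).aestronglyMeasurable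
    calc ∫ ω, u ω i * v ω i ∂μ = (∫ ω, u ω i ∂μ) * ∫ ω, v ω i ∂μ := h
      _ = 0 := by rw [hmu i, hmv i]; ring
  have key : ∀ i, ∫ ω, (u ω i - v ω i + w i) ^ 2 ∂μ
      = (∫ ω, u ω i ^ 2 ∂μ) + (∫ ω, v ω i ^ 2 ∂μ) + w i ^ 2 := by
    intro i
    rw [hexp i, integral_add (iD i) (integrable_const _), integral_sub (iC i)
      (((hv i).const_mul _)), integral_add (iB i) ((hu i).const_mul _),
      integral_sub (iA i) ((huv i).const_mul 2), integral_add (hu2 i) (hv2 i),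
      integral_const_mul, integral_const_mul, integral_const_mul,
      hcross i, hmu i, hmv i, integral_const]
    simp
  rw [integral_finset_sum _ fun i _ => isq i]
  rw [Finset.sum_congr rfl fun i _ => key i]
  rw [Finset.sum_add_distrib, Finset.sum_add_distrib,
    ← integral_finset_sum _ fun i _ => hu2 i, ← integral_finset_sum _ fun i _ => hv2 i]

/-- Margin lower bound for the original triplet in terms of the latent triplet,
and the resulting expected margin constraint. -/
theorem expected_triplet_margin_bound {d : ℕ} {Ω : Type*} [MeasurableSpace Ω]
    (μ : Measure Ω) [IsProbabilityMeasure μ]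
    (M : Matrix (Fin d) (Fin d) ℝ) (hM : M.PosSemidef)
    (Xi Xj Xk : Ω → Fin d → ℝ) (zo zp zq : Fin d → ℝ)
    (hmeasi : Measurable Xi) (hmeasj : Measurable Xj) (hmeask : Measurable Xk)
    (hindepij : IndepFun Xi Xj μ)
    (hidentij : IdentDistrib Xi Xj μ μ)
    (hzp : zp = zo)
    (hindepik : IndepFun Xi Xk μ)
    (hXi : ∀ i, Integrable (fun ω => Xi ω i) μ)
    (hXk : ∀ i, Integrable (fun ω => Xk ω i) μ)
    (hmeani : ∀ i, ∫ ω, Xi ω i ∂μ = zo i)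
    (hmeank : ∀ i, ∫ ω, Xk ω i ∂μ = zq i)
    (hIij : Integrable (fun ω => (Xi ω - Xj ω) ⬝ᵥ M *ᵥ (Xi ω - Xj ω)) μ)
    (hIik : Integrable (fun ω => (Xi ω - Xk ω) ⬝ᵥ M *ᵥ (Xi ω - Xk ω)) μ)
    (hIi : Integrable (fun ω => (Xi ω - zo) ⬝ᵥ M *ᵥ (Xi ω - zo)) μ)
    (hIk : Integrable (fun ω => (Xk ω - zq) ⬝ᵥ M *ᵥ (Xk ω - zq)) μ) :
    (∫ ω, (Xi ω - Xk ω) ⬝ᵥ M *ᵥ (Xi ω - Xk ω) ∂μ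
        - ∫ ω, (Xi ω - Xj ω) ⬝ᵥ M *ᵥ (Xi ω - Xj ω) ∂μ
      ≥ (zo - zq) ⬝ᵥ M *ᵥ (zo - zq) - (zo - zp) ⬝ᵥ M *ᵥ (zo - zp)
        - ∫ ω, (Xi ω - zo) ⬝ᵥ M *ᵥ (Xi ω - zo) ∂μ)
    ∧ ((zo - zq) ⬝ᵥ M *ᵥ (zo - zq) - (zo - zp) ⬝ᵥ M *ᵥ (zo - zp)
        ≥ 1 + ∫ ω, (Xi ω - zo) ⬝ᵥ M *ᵥ (Xi ω - zo) ∂μ →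
      ∫ ω, (Xi ω - Xk ω) ⬝ᵥ M *ᵥ (Xi ω - Xk ω) ∂μ
        - ∫ ω, (Xi ω - Xj ω) ⬝ᵥ M *ᵥ (Xi ω - Xj ω) ∂μ ≥ 1) := by
  -- square root decomposition of M
  obtain ⟨S, hSdef⟩ : ∃ S : Matrix (Fin d) (Fin d) ℝ, M = Sᴴ * S := by
    open scoped MatrixOrder Matrix.Norms.L2Operator in
    exact CStarAlgebra.nonneg_iff_eq_star_mul_self.mp hM.nonneg
  have hquad : ∀ v : Fin d → ℝ, v ⬝ᵥ M *ᵥ v = ∑ i, (S *ᵥ v) i ^ 2 := by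
    intro v
    rw [hSdef, show Sᴴ = Sᵀ from Matrix.conjTranspose_eq_transpose_of_trivial S,
      ← Matrix.mulVec_mulVec, Matrix.dotProduct_mulVec, ← Matrix.mulVec_transpose]
    simp [dotProduct, sq]
  -- measurability of components of S *ᵥ (v - z)
  have hφm : ∀ (z : Fin d → ℝ) (i : Fin d),
      Measurable fun v : Fin d → ℝ => (S *ᵥ (v - z)) i := by
    intro z i
    simp only [Matrix.mulVec, dotProduct, Pi.sub_apply]
    exact Finset.measurable_sum _ fun j _ =>
      measurable_const.mul ((measurable_pi_apply j).sub measurable_const)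
  -- measurability of the quadratic form v ↦ (v - z) ⬝ᵥ M *ᵥ (v - z)
  have hgm : ∀ z : Fin d → ℝ, Measurable fun v : Fin d → ℝ => (v - z) ⬝ᵥ M *ᵥ (v - z) := by
    intro z
    simp only [Matrix.mulVec, dotProduct, Pi.sub_apply]
    exact Finset.measurable_sum _ fun i _ =>
      ((measurable_pi_apply i).sub measurable_const).mul
        (Finset.measurable_sum _ fun j _ =>
          measurable_const.mul ((measurable_pi_apply j).sub measurable_const))
  -- componentwise integrability and means of the centered variables
  have hcomp : ∀ (X : Ω → Fin d → ℝ) (z : Fin d → ℝ),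
      (∀ i, Integrable (fun ω => X ω i) μ) → (∀ i, ∫ ω, X ω i ∂μ = z i) →
      (∀ i, Integrable (fun ω => (S *ᵥ (X ω - z)) i) μ) ∧
      (∀ i, ∫ ω, (S *ᵥ (X ω - z)) i ∂μ = 0) := by
    intro X z hint hmean
    have hI : ∀ i j, Integrable (fun ω => S i j * (X ω j - z j)) μ := fun i j =>
      ((hint j).sub (integrable_const _)).const_mul _
    have h1 : ∀ i, Integrable (fun ω => (S *ᵥ (X ω - z)) i) μ := by
      intro i
      simp only [Matrix.mulVec, dotProduct, Pi.sub_apply]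
      exact integrable_finset_sum _ fun j _ => hI i j
    refine ⟨h1, fun i => ?_⟩
    simp only [Matrix.mulVec, dotProduct, Pi.sub_apply]
    rw [integral_finset_sum _ fun j _ => hI i j]
    refine Finset.sum_eq_zero fun j _ => ?_
    rw [integral_const_mul, integral_sub (hint j) (integrable_const _), hmean j,
      integral_const]
    simp
  obtain ⟨hai, hma⟩ := hcomp Xi zo hXi hmeani
  obtain ⟨hck, hmc⟩ := hcomp Xk zq hXk hmeank
  -- Xj facts via identical distribution
  have hXj : ∀ i, Integrable (fun ω => Xj ω i) μ := fun i =>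
    ((hidentij.comp (measurable_pi_apply i)).integrable_iff).1 (hXi i)
  have hmeanj : ∀ i, ∫ ω, Xj ω i ∂μ = zo i := by
    intro i
    have h := (hidentij.comp (measurable_pi_apply i)).integral_eq
    simp only [Function.comp_def] at h
    rw [← h]; exact hmeani i
  obtain ⟨hbj, hmb⟩ := hcomp Xj zo hXj hmeanj
  -- integrability of sums of squares
  have hIa2 : Integrable (fun ω => ∑ i, (S *ᵥ (Xi ω - zo)) i ^ 2) μ := by
    have := hIi; simp only [hquad] at this; exact this
  have hIc2 : Integrable (fun ω => ∑ i, (S *ᵥ (Xk ω - zq)) i ^ 2) μ := by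
    have := hIk; simp only [hquad] at this; exact this
  have hIbform : Integrable (fun ω => (Xj ω - zo) ⬝ᵥ M *ᵥ (Xj ω - zo)) μ :=
    ((hidentij.comp (hgm zo)).integrable_iff).1 hIi
  have hIb2 : Integrable (fun ω => ∑ i, (S *ᵥ (Xj ω - zo)) i ^ 2) μ := by
    have := hIbform; simp only [hquad] at this; exact this
  -- componentwise square integrability via domination
  have hsq : ∀ (X : Ω → Fin d → ℝ) (z : Fin d → ℝ), Measurable X →
      Integrable (fun ω => ∑ i, (S *ᵥ (X ω - z)) i ^ 2) μ →
      ∀ i, Integrable (fun ω => (S *ᵥ (X ω - z)) i ^ 2) μ := by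
    intro X z hmX hint i
    refine hint.mono' ((((hφm z i).comp hmX).pow_const 2).aestronglyMeasurable) ?_
    filter_upwards with ω
    rw [Real.norm_eq_abs, abs_of_nonneg (sq_nonneg _)]
    exact Finset.single_le_sum (f := fun j => (S *ᵥ (X ω - z)) j ^ 2)
      (fun j _ => sq_nonneg _) (Finset.mem_univ i)
  have hai2 := hsq Xi zo hmeasi hIa2
  have hbj2 := hsq Xj zo hmeasj hIb2
  have hck2 := hsq Xk zq hmeask hIc2
  -- independence of components
  have hindab : ∀ i, IndepFun (fun ω => (S *ᵥ (Xi ω - zo)) i)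
      (fun ω => (S *ᵥ (Xj ω - zo)) i) μ := fun i =>
    hindepij.comp (hφm zo i) (hφm zo i)
  have hindac : ∀ i, IndepFun (fun ω => (S *ᵥ (Xi ω - zo)) i)
      (fun ω => (S *ᵥ (Xk ω - zq)) i) μ := fun i =>
    hindepik.comp (hφm zo i) (hφm zq i)
  -- expectation of the ij quadratic form
  have eij : ∫ ω, (Xi ω - Xj ω) ⬝ᵥ M *ᵥ (Xi ω - Xj ω) ∂μ
      = (∫ ω, ∑ i, (S *ᵥ (Xi ω - zo)) i ^ 2 ∂μ)
        + (∫ ω, ∑ i, (S *ᵥ (Xj ω - zo)) i ^ 2 ∂μ) := by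
    have hrw : (fun ω => (Xi ω - Xj ω) ⬝ᵥ M *ᵥ (Xi ω - Xj ω))
        = fun ω => ∑ i, ((S *ᵥ (Xi ω - zo)) i - (S *ᵥ (Xj ω - zo)) i + (0 : ℝ)) ^ 2 := by
      funext ω
      have h1 : Xi ω - Xj ω = (Xi ω - zo) - (Xj ω - zo) := by abel
      rw [hquad, h1, Matrix.mulVec_sub]
      simp
    rw [hrw, integral_sum_sq_expand μ _ _ _ hai hbj hai2 hbj2 hma hmb hindab]
    simp
  -- expectation of the ik quadratic form
  have eik : ∫ ω, (Xi ω - Xk ω) ⬝ᵥ M *ᵥ (Xi ω - Xk ω) ∂μ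
      = (∫ ω, ∑ i, (S *ᵥ (Xi ω - zo)) i ^ 2 ∂μ)
        + (∫ ω, ∑ i, (S *ᵥ (Xk ω - zq)) i ^ 2 ∂μ)
        + ∑ i, (S *ᵥ (zo - zq)) i ^ 2 := by
    have hrw : (fun ω => (Xi ω - Xk ω) ⬝ᵥ M *ᵥ (Xi ω - Xk ω))
        = fun ω => ∑ i, ((S *ᵥ (Xi ω - zo)) i - (S *ᵥ (Xk ω - zq)) i
            + (S *ᵥ (zo - zq)) i) ^ 2 := by
      funext ω
      have h1 : Xi ω - Xk ω = (Xi ω - zo) - (Xk ω - zq) + (zo - zq) := by abel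
      rw [hquad, h1, Matrix.mulVec_add, Matrix.mulVec_sub]
      simp
    rw [hrw, integral_sum_sq_expand μ _ _ _ hai hck hai2 hck2 hma hmc hindac]
  -- E[sum b^2] = E[sum a^2]
  have ebb : ∫ ω, ∑ i, (S *ᵥ (Xj ω - zo)) i ^ 2 ∂μ
      = ∫ ω, ∑ i, (S *ᵥ (Xi ω - zo)) i ^ 2 ∂μ := by
    have h := (hidentij.comp (hgm zo)).integral_eq
    simp only [Function.comp] at h
    simp only [hquad] at h
    exact h.symm
  -- remaining simple facts
  have hzqform : (zo - zq) ⬝ᵥ M *ᵥ (zo - zq) = ∑ i, (S *ᵥ (zo - zq)) i ^ 2 := hquad _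
  have hzpform : (zo - zp) ⬝ᵥ M *ᵥ (zo - zp) = 0 := by
    simp [hzp]
  have hIiform : ∫ ω, (Xi ω - zo) ⬝ᵥ M *ᵥ (Xi ω - zo) ∂μ
      = ∫ ω, ∑ i, (S *ᵥ (Xi ω - zo)) i ^ 2 ∂μ := by
    simp only [hquad]
  have hcnonneg : 0 ≤ ∫ ω, ∑ i, (S *ᵥ (Xk ω - zq)) i ^ 2 ∂μ :=
    integral_nonneg fun ω => Finset.sum_nonneg fun i _ => sq_nonneg _
  constructor
  · rw [eij, eik, ebb, hzqform, hzpform, hIiform]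
    linarith
  · intro h
    rw [eij, eik, ebb]
    rw [hzqform, hzpform, hIiform] at h
    linarith
end

section
/- Let M be PSD and suppose D_M(z_o', z_q') ≤ c/2 for a constant c ≥ 0. Then for any z_o, z_q: D_M^2(z_o, z_q) ≥ D_M^2(z_o', z_q') − c·D_M(z_o, z_o') − c·D_M(z_q, z_q') + (D_M(z_o,z_o') − D_M(z_q,z_q'))^2. In particular, if additionally D_M(z_o,z_o') ≥ 1 and D_M(z_q,z_q') ≥ 1, then D_M^2(z_o,z_q) ≥ D_M^2(z_o',z_q') − c·D_M^2(z_o,z_o') − c·D_M^2(z_q,z_q'). -/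
open Matrix

noncomputable def DM {d : ℕ} (M : Matrix (Fin d) (Fin d) ℝ) (u v : Fin d → ℝ) : ℝ :=
  Real.sqrt ((u - v) ⬝ᵥ M *ᵥ (u - v))

open scoped MatrixOrder

lemma DM_eq_norm {d : ℕ} {M : Matrix (Fin d) (Fin d) ℝ} (hM : M.PosSemidef) (u v : Fin d → ℝ) :
    DM M u v = ‖(WithLp.equiv 2 (Fin d → ℝ)).symm (CFC.sqrt M *ᵥ (u - v))‖ := by
  have hS : CFC.sqrt M * CFC.sqrt M = M := CFC.sqrt_mul_sqrt_self M hM.nonneg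
  have hsym : (CFC.sqrt M)ᵀ = CFC.sqrt M := by
    have h := (CFC.sqrt_nonneg M).posSemidef.1
    rw [Matrix.IsHermitian, conjTranspose_eq_transpose_of_trivial] at h
    exact h
  set y := CFC.sqrt M *ᵥ (u - v) with hy
  have hquad : (u - v) ⬝ᵥ M *ᵥ (u - v) = y ⬝ᵥ y := by
    rw [← hS, ← Matrix.mulVec_mulVec, Matrix.dotProduct_mulVec, hy,
      ← Matrix.mulVec_transpose, hsym]
  rw [DM, hquad, EuclideanSpace.norm_eq]
  congr 1
  simp [dotProduct, Real.norm_eq_abs, sq_abs, pow_two]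

lemma DM_nonneg {d : ℕ} (M : Matrix (Fin d) (Fin d) ℝ) (u v : Fin d → ℝ) : 0 ≤ DM M u v :=
  Real.sqrt_nonneg _

lemma DM_symm {d : ℕ} {M : Matrix (Fin d) (Fin d) ℝ} (hM : M.PosSemidef) (u v : Fin d → ℝ) :
    DM M u v = DM M v u := by
  rw [DM_eq_norm hM, DM_eq_norm hM]
  have h : CFC.sqrt M *ᵥ (v - u) = -(CFC.sqrt M *ᵥ (u - v)) := by
    rw [← Matrix.mulVec_neg]; congr 1; abel
  rw [h]
  exact (norm_neg _).symm

lemma DM_triangle {d : ℕ} {M : Matrix (Fin d) (Fin d) ℝ} (hM : M.PosSemidef) (u v w : Fin d → ℝ) :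
    DM M u w ≤ DM M u v + DM M v w := by
  rw [DM_eq_norm hM, DM_eq_norm hM, DM_eq_norm hM]
  have h : CFC.sqrt M *ᵥ (u - w) = CFC.sqrt M *ᵥ (u - v) + CFC.sqrt M *ᵥ (v - w) := by
    rw [← Matrix.mulVec_add]; congr 1; abel
  rw [h]
  simp only [WithLp.equiv_symm_apply, WithLp.toLp_add]
  exact norm_add_le _ _

lemma DM_arith (a b e t c : ℝ) (ha : 0 ≤ a) (hb : 0 ≤ b) (he : 0 ≤ e) (ht : 0 ≤ t)
    (h1 : e ≤ t + a + b) (h2 : a ≤ t + b + e) (h3 : b ≤ t + a + e)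
    (hce : 2 * e ≤ c) :
    t ^ 2 ≥ e ^ 2 - c * a - c * b + (a - b) ^ 2 := by
  rcases le_or_gt (a + b) e with h | h
  · nlinarith [mul_nonneg ha hb, sq_nonneg (t - (e - a - b))]
  · rcases le_or_gt e (a - b) with h' | h'
    · nlinarith [sq_nonneg (t - (a - b - e)), mul_nonneg ha hb]
    · rcases le_or_gt e (b - a) with h'' | h''
      · nlinarith [sq_nonneg (t - (b - a - e)), mul_nonneg ha hb]
      · nlinarith [sq_nonneg t, mul_nonneg ha hb, sq_nonneg (a - b)]

/-- Lower bound on the latent dissimilar distance with a bounded reference pair,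
and the simplified squared-distance bound when the displacements are large. -/
theorem quadform_dissimilar_lower_bound {d : ℕ} (M : Matrix (Fin d) (Fin d) ℝ)
    (hM : M.PosSemidef) (c : ℝ) (hc : 0 ≤ c) (zo' zq' : Fin d → ℝ)
    (hbound : DM M zo' zq' ≤ c / 2) :
    ∀ zo zq : Fin d → ℝ,
      (DM M zo zq ^ 2
          ≥ DM M zo' zq' ^ 2 - c * DM M zo zo' - c * DM M zq zq'
            + (DM M zo zo' - DM M zq zq') ^ 2)
      ∧ (1 ≤ DM M zo zo' → 1 ≤ DM M zq zq' →
          DM M zo zq ^ 2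
            ≥ DM M zo' zq' ^ 2 - c * DM M zo zo' ^ 2 - c * DM M zq zq' ^ 2) := by
  intro zo zq
  set a := DM M zo zo'
  set b := DM M zq zq'
  set e := DM M zo' zq'
  set t := DM M zo zq
  have ha : 0 ≤ a := DM_nonneg _ _ _
  have hb : 0 ≤ b := DM_nonneg _ _ _
  have he : 0 ≤ e := DM_nonneg _ _ _
  have ht : 0 ≤ t := DM_nonneg _ _ _
  have h1 : e ≤ t + a + b := by
    calc e ≤ DM M zo' zo + DM M zo zq' := DM_triangle hM _ _ _
    _ ≤ DM M zo' zo + (DM M zo zq + DM M zq zq') := by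
        have := DM_triangle hM zo zq zq'; linarith
    _ = t + a + b := by rw [DM_symm hM zo' zo]; ring
  have h2 : a ≤ t + b + e := by
    calc a ≤ DM M zo zq + DM M zq zo' := DM_triangle hM _ _ _
    _ ≤ DM M zo zq + (DM M zq zq' + DM M zq' zo') := by
        have := DM_triangle hM zq zq' zo'; linarith
    _ = t + b + e := by rw [DM_symm hM zq' zo']; ring
  have h3 : b ≤ t + a + e := by
    calc b ≤ DM M zq zo + DM M zo zq' := DM_triangle hM _ _ _
    _ ≤ DM M zq zo + (DM M zo zo' + DM M zo' zq') := by
        have := DM_triangle hM zo zo' zq'; linarith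
    _ = t + a + e := by rw [DM_symm hM zq zo]; ring
  have hce : 2 * e ≤ c := by linarith
  have main : t ^ 2 ≥ e ^ 2 - c * a - c * b + (a - b) ^ 2 :=
    DM_arith a b e t c ha hb he ht h1 h2 h3 hce
  refine ⟨main, fun ha1 hb1 => ?_⟩
  have haa : a ≤ a ^ 2 := by nlinarith
  have hbb : b ≤ b ^ 2 := by nlinarith
  nlinarith [sq_nonneg (a - b), mul_le_mul_of_nonneg_left haa hc, mul_le_mul_of_nonneg_left hbb hc]
end
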